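/- In the generalized matching-pennies game (I_m, −I_m), for any 0 ≤ ε ≤ 1/m, every ε-well-supported Nash equilibrium (x, y) satisfies ‖x − u_m‖₁ ≤ mε and ‖y − u_m‖₁ ≤ mε, where u_m is the uniform distribution on [m]. -/
import Mathlib


open Finset

def InSimplex {m : ℕ} (x : Fin m → ℝ) : Prop :=
  (∀ i, 0 ≤ x i) ∧ ∑ i, x i = 1

def IsWNE {m : ℕ} (R C : Matrix (Fin m) (Fin m) ℝ) (ε : ℝ)
    (x y : Fin m → ℝ) : Prop :=
  (∀ i, 0 < x i → ∀ k, ∑ j, R k j * y j - ε ≤ ∑ j, R i j * y j) ∧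
  (∀ j, 0 < y j → ∀ k, ∑ i, x i * C i k - ε ≤ ∑ i, x i * C i j)

lemma sandwich_l1 {m : ℕ} (hm : 0 < m) (ε : ℝ) (z : Fin m → ℝ)
    (hsum : ∑ i, z i = 1) (a : ℝ) (ha : ∀ i, a ≤ z i) (hb : ∀ i, z i ≤ a + ε) :
    ∑ i, |z i - 1 / m| ≤ m * ε := by
  have hm' : (0:ℝ) < m := by exact_mod_cast hm
  have h1 : (m:ℝ) * a ≤ 1 := by
    calc (m:ℝ) * a = ∑ _i : Fin m, a := by simp [mul_comm]
    _ ≤ ∑ i, z i := Finset.sum_le_sum fun i _ => ha i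
    _ = 1 := hsum
  have h2 : 1 ≤ (m:ℝ) * (a + ε) := by
    calc (1:ℝ) = ∑ i, z i := hsum.symm
    _ ≤ ∑ _i : Fin m, (a + ε) := Finset.sum_le_sum fun i _ => hb i
    _ = m * (a + ε) := by simp; ring
  have ha' : a ≤ 1 / m := by rw [le_div_iff₀ hm']; linarith [h1, mul_comm a (m:ℝ)]
  have hb' : 1 / (m:ℝ) ≤ a + ε := by rw [div_le_iff₀ hm']; linarith [mul_comm (a + ε) (m:ℝ)]
  calc ∑ i, |z i - 1 / m| ≤ ∑ _i : Fin m, ε := by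
        refine Finset.sum_le_sum fun i _ => ?_
        rw [abs_le]
        constructor <;> [linarith [ha i]; linarith [hb i]]
  _ = m * ε := by simp [mul_comm]

/-- every ε-WNE of generalized matching pennies (I_m, −I_m),
for 0 ≤ ε ≤ 1/m, is mε-close in ℓ₁ to (uniform, uniform). -/
theorem matchingPennies_wne_near_uniform {m : ℕ} (hm : 0 < m)
    (ε : ℝ) (hε0 : 0 ≤ ε) (hε : ε ≤ 1 / m)
    (x y : Fin m → ℝ) (hx : InSimplex x) (hy : InSimplex y)
    (h : IsWNE (1 : Matrix (Fin m) (Fin m) ℝ) (-(1 : Matrix (Fin m) (Fin m) ℝ)) ε x y) :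
    (∑ i, |x i - 1 / m| ≤ m * ε) ∧ (∑ i, |y i - 1 / m| ≤ m * ε) := by
  obtain ⟨hx0, hx1⟩ := hx
  obtain ⟨hy0, hy1⟩ := hy
  obtain ⟨h1, h2⟩ := h
  have hm' : (0:ℝ) < m := by exact_mod_cast hm
  have hmε : (m:ℝ) * ε ≤ 1 := by
    rw [← le_div_iff₀' hm'] ; exact hε
  -- simplify the WNE conditions
  have h1' : ∀ i, 0 < x i → ∀ k, y k - ε ≤ y i := by
    intro i hi k
    have := h1 i hi k
    simpa [Matrix.one_apply] using this
  have h2' : ∀ j, 0 < y j → ∀ k, x j ≤ x k + ε := by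
    intro j hj k
    have := h2 j hj k
    simp [Matrix.one_apply] at this
    linarith
  -- Step B : supp x ⊆ supp y
  have hB : ∀ j, 0 < x j → 0 < y j := by
    intro j hj
    by_contra hyj
    have hyj0 : y j = 0 := le_antisymm (le_of_not_gt hyj) (hy0 j)
    have hkey : ∀ k, y k ≤ ε := by
      intro k
      have := h1' j hj k
      linarith [this, hyj0]
    rcases eq_or_lt_of_le hε0 with hε' | hε'
    · -- ε = 0 : all y k ≤ 0, sum can't be 1
      have : ∑ i, y i ≤ 0 := by
        refine Finset.sum_nonpos fun i _ => ?_
        have := hkey i; linarith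
      linarith [hy1]
    · -- ε > 0 : sum over all coords, with strict deficit at j
      have hlt : ∑ i, y i < ∑ _i : Fin m, ε := by
        refine Finset.sum_lt_sum (fun i _ => hkey i) ⟨j, Finset.mem_univ j, ?_⟩
        rw [hyj0]; exact hε'
      have : (1:ℝ) < m * ε := by
        rw [hy1] at hlt
        calc (1:ℝ) < ∑ _i : Fin m, ε := hlt
        _ = m * ε := by simp [mul_comm]
      linarith
  -- Step C : all x coordinates positive
  have hC : ∀ j, 0 < x j := by
    intro j
    by_contra hxj
    have hxj0 : x j = 0 := le_antisymm (le_of_not_gt hxj) (hx0 j)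
    have hkey : ∀ k, x k ≤ ε := by
      intro k
      rcases lt_or_ge 0 (x k) with hk | hk
      · have hyk : 0 < y k := hB k hk
        have := h2' k hyk j
        linarith [this, hxj0]
      · linarith [hx0 k]
    have hmε1 : (m:ℝ) * ε = 1 := by
      have : (1:ℝ) ≤ m * ε := by
        calc (1:ℝ) = ∑ i, x i := hx1.symm
        _ ≤ ∑ _i : Fin m, ε := Finset.sum_le_sum fun i _ => hkey i
        _ = m * ε := by simp [mul_comm]
      linarith
    have hεpos : 0 < ε := by
      by_contra hc
      have : (m:ℝ) * ε ≤ 0 :=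
        mul_nonpos_of_nonneg_of_nonpos (le_of_lt hm') (le_of_not_gt hc)
      linarith
    have hlt : ∑ i, x i < ∑ _i : Fin m, ε := by
      refine Finset.sum_lt_sum (fun i _ => hkey i) ⟨j, Finset.mem_univ j, ?_⟩
      rw [hxj0]; exact hεpos
    rw [hx1] at hlt
    have : (1:ℝ) < m * ε := by
      calc (1:ℝ) < ∑ _i : Fin m, ε := hlt
      _ = m * ε := by simp [mul_comm]
    linarith
  have hD : ∀ j, 0 < y j := fun j => hB j (hC j)
  -- min elements
  have hne : (Finset.univ : Finset (Fin m)).Nonempty := by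
    simpa [Finset.univ_nonempty_iff] using Fin.pos_iff_nonempty.mp hm
  obtain ⟨i₀, -, hi₀⟩ := Finset.exists_min_image Finset.univ x hne
  obtain ⟨j₀, -, hj₀⟩ := Finset.exists_min_image Finset.univ y hne
  constructor
  · exact sandwich_l1 hm ε x hx1 (x i₀) (fun i => hi₀ i (Finset.mem_univ i))
      (fun i => h2' i (hD i) i₀)
  · refine sandwich_l1 hm ε y hy1 (y j₀) (fun i => hj₀ i (Finset.mem_univ i))
      (fun i => ?_)
    have := h1' j₀ (hC j₀) i
    linarith
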